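/- The multi-sample gradient estimate is unbiased: the function θ ↦ ∑_{(c_1,…,c_n) ∈ C^n} (∏_{i=1}^n π θ c_i) * log ((1/n) * ∑_{i=1}^n κ θ c_i a*) has derivative at θ₀ equal to ∑_{(c_1,…,c_n) ∈ C^n} (∏_{i=1}^n π θ₀ c_i) * [ (∑_{i=1}^n sc c_i) * log ((1/n) * ∑_{j=1}^n κ θ₀ c_j a*) + (∑_{i=1}^n deriv (fun θ => κ θ c_i a*) θ₀) / (∑_{j=1}^n κ θ₀ c_j a*) ]. -/

import Mathlib

/-- The multi-sample gradient estimate is unbiased: the function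
`θ ↦ ∑_{c₁,…,cₙ} (∏ i, π θ cᵢ) * log ((1/n) * ∑ i, κ θ cᵢ a*)` has derivative at `θ₀` equal to
`∑_{c₁,…,cₙ} (∏ i, π θ₀ cᵢ) * ((∑ i, sc cᵢ) * log ((1/n) * ∑ j, κ θ₀ cⱼ a*)
  + (∑ i, deriv (fun θ => κ θ cᵢ a*) θ₀) / (∑ j, κ θ₀ cⱼ a*))`,
where `sc c = deriv (fun θ => log (π θ c)) θ₀`. -/
theorem multi_sample_gradient_unbiased
    {C A : Type*} [Fintype C] [Fintype A] [Nonempty C] [Nonempty A]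
    (θ₀ : ℝ) (astar : A)
    (π : ℝ → C → ℝ) (κ : ℝ → C → A → ℝ)
    (hπ0 : ∀ θ c, 0 ≤ π θ c) (hπ1 : ∀ θ, ∑ c, π θ c = 1)
    (hκ0 : ∀ θ c a, 0 ≤ κ θ c a) (hκ1 : ∀ θ c, ∑ a, κ θ c a = 1)
    (hπpos : ∀ c, 0 < π θ₀ c) (hκpos : ∀ c a, 0 < κ θ₀ c a)
    (hπdiff : ∀ c, DifferentiableAt ℝ (fun θ => π θ c) θ₀)
    (hκdiff : ∀ c a, DifferentiableAt ℝ (fun θ => κ θ c a) θ₀)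
    (n : ℕ) (hn : 1 ≤ n) :
    HasDerivAt
      (fun θ =>
        ∑ cs : Fin n → C,
          (∏ i, π θ (cs i)) * Real.log ((1 / (n : ℝ)) * ∑ i, κ θ (cs i) astar))
      (∑ cs : Fin n → C,
        (∏ i, π θ₀ (cs i)) *
          ((∑ i, deriv (fun θ => Real.log (π θ (cs i))) θ₀) *
              Real.log ((1 / (n : ℝ)) * ∑ j, κ θ₀ (cs j) astar) +
            (∑ i, deriv (fun θ => κ θ (cs i) astar) θ₀) / (∑ j, κ θ₀ (cs j) astar)))
      θ₀ := by
  have hnR : (0:ℝ) < n := by exact_mod_cast hn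
  haveI : Nonempty (Fin n) := ⟨⟨0, hn⟩⟩
  apply HasDerivAt.fun_sum
  intro cs _
  -- derivative of the product
  have hP : HasDerivAt (fun θ => ∏ i, π θ (cs i))
      (∑ i, (∏ j ∈ Finset.univ.erase i, π θ₀ (cs j)) •
        deriv (fun θ => π θ (cs i)) θ₀) θ₀ := by
    have := HasDerivAt.fun_finsetProd
      (u := Finset.univ) (f := fun i θ => π θ (cs i))
      (f' := fun i => deriv (fun θ => π θ (cs i)) θ₀) (x := θ₀)
      (fun i _ => (hπdiff (cs i)).hasDerivAt)
    simpa using this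
  -- derivative of the sum inside the log
  have hSpos : 0 < ∑ j, κ θ₀ (cs j) astar :=
    Finset.sum_pos (fun j _ => hκpos (cs j) astar) Finset.univ_nonempty
  have hS : HasDerivAt (fun θ => (1 / (n:ℝ)) * ∑ i, κ θ (cs i) astar)
      ((1 / (n:ℝ)) * ∑ i, deriv (fun θ => κ θ (cs i) astar) θ₀) θ₀ :=
    (HasDerivAt.fun_sum (fun i _ => (hκdiff (cs i) astar).hasDerivAt)).const_mul _
  have hne : (1 / (n:ℝ)) * ∑ i, κ θ₀ (cs i) astar ≠ 0 := by positivity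
  have hL := hS.log hne
  have := hP.fun_mul hL
  convert this using 1
  case e'_4 => rfl
  -- now an algebraic identity
  have hsc : ∀ c, deriv (fun θ => Real.log (π θ c)) θ₀
      = deriv (fun θ => π θ c) θ₀ / π θ₀ c := fun c =>
    ((hπdiff c).hasDerivAt.log (hπpos c).ne').deriv
  have hPsc : (∑ i, (∏ j ∈ Finset.univ.erase i, π θ₀ (cs j)) •
        deriv (fun θ => π θ (cs i)) θ₀)
      = (∏ i, π θ₀ (cs i)) * ∑ i, deriv (fun θ => Real.log (π θ (cs i))) θ₀ := by
    rw [Finset.mul_sum]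
    refine Finset.sum_congr rfl fun i _ => ?_
    rw [hsc, smul_eq_mul, ← Finset.mul_prod_erase Finset.univ _ (Finset.mem_univ i)]
    rw [mul_comm (π θ₀ (cs i)), mul_assoc, mul_div_cancel₀ _ (hπpos (cs i)).ne']
  rw [hPsc]
  have hfrac : ((1 / (n:ℝ)) * ∑ i, deriv (fun θ => κ θ (cs i) astar) θ₀) /
      ((1 / (n:ℝ)) * ∑ i, κ θ₀ (cs i) astar)
      = (∑ i, deriv (fun θ => κ θ (cs i) astar) θ₀) / (∑ j, κ θ₀ (cs j) astar) := by
    rw [mul_div_mul_left _ _ (by positivity : (1 / (n:ℝ)) ≠ 0)]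
  rw [hfrac]
  ring
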